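/- Let Y be compact, I finite, f_i, F̂_i : Y → ℝ continuous (i ∈ I ∪ {0}), f := f_0, F̂ := F̂_0, X := {x ∈ Y : f_i(x) ≤ 0 ∀i∈I}, X_γ := {x ∈ Y : f_i(x) ≤ γ ∀i∈I}, X̂ := {x ∈ Y : F̂_i(x) ≤ ε̂_i ∀i∈I}, and let x* minimize f over X with value f*. Assume: (F) for all i ∈ I, max(0, sup_Y(f_i − F̂_i)) ≤ γ − ε̂_i; (P) for all i ∈ I, max(0, F̂_i(x*) − f_i(x*)) ≤ ε̂_i; (M) max(0, sup_{x∈X_γ}(f(x) − f(x*) − F̂(x) + F̂(x*))) ≤ t − t_1, where t, t_1, γ ≥ 0. Then X̂ ⊆ X_γ, and every x̂ ∈ X̂ with F̂(x̂) ≤ inf_{X̂} F̂ + t_1 satisfies f(x̂) ≤ f* + t. -/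

import Mathlib

/-- Optimality deviation with exterior approximation: under (F) the perturbed
feasible set lies in the relaxed set `X_γ`, and under (P), (M) every `t₁`-near
solution of the perturbed problem is a `t`-near solution of the original one. -/
theorem stmt_3 {d : ℕ} {ι : Type*} [Fintype ι]
    (Y : Set (EuclideanSpace ℝ (Fin d))) (hY : IsCompact Y)
    (f Fh : ι → EuclideanSpace ℝ (Fin d) → ℝ)
    (f0 F0 : EuclideanSpace ℝ (Fin d) → ℝ)
    (hfc : ∀ i, ContinuousOn (f i) Y) (hFc : ∀ i, ContinuousOn (Fh i) Y)
    (hf0 : ContinuousOn f0 Y) (hF0 : ContinuousOn F0 Y)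
    (εh : ι → ℝ) (γ t t1 : ℝ) (hγ : 0 ≤ γ) (ht1 : 0 ≤ t1) (ht : t1 ≤ t)
    (xstar : EuclideanSpace ℝ (Fin d)) (hxs : xstar ∈ {x ∈ Y | ∀ i, f i x ≤ 0})
    (hmin : ∀ z ∈ {x ∈ Y | ∀ i, f i x ≤ 0}, f0 xstar ≤ f0 z)
    (hF : ∀ i, 0 ≤ γ - εh i ∧ ∀ y ∈ Y, f i y - Fh i y ≤ γ - εh i)
    (hP : ∀ i, max 0 (Fh i xstar - f i xstar) ≤ εh i)
    (hM : ∀ x ∈ Y, (∀ i, f i x ≤ γ) → f0 x - f0 xstar - (F0 x - F0 xstar) ≤ t - t1) :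
    {x ∈ Y | ∀ i, Fh i x ≤ εh i} ⊆ {x ∈ Y | ∀ i, f i x ≤ γ} ∧
    ∀ xh ∈ {x ∈ Y | ∀ i, Fh i x ≤ εh i},
      F0 xh ≤ sInf (F0 '' {x ∈ Y | ∀ i, Fh i x ≤ εh i}) + t1 →
      f0 xh ≤ f0 xstar + t := by
  have hsub : {x ∈ Y | ∀ i, Fh i x ≤ εh i} ⊆ {x ∈ Y | ∀ i, f i x ≤ γ} := by
    rintro x ⟨hxY, hx⟩
    refine ⟨hxY, fun i => ?_⟩
    have h1 := (hF i).2 x hxY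
    have h2 := hx i
    linarith
  refine ⟨hsub, ?_⟩
  intro xh hxh hnear
  -- x* is in the perturbed feasible set
  have hxsX : xstar ∈ {x ∈ Y | ∀ i, Fh i x ≤ εh i} := by
    refine ⟨hxs.1, fun i => ?_⟩
    have := (hP i).trans_eq rfl
    have h1 : Fh i xstar - f i xstar ≤ εh i := le_trans (le_max_right _ _) (hP i)
    have h2 := hxs.2 i
    linarith
  -- F0 image bounded below
  have hbdd : BddBelow (F0 '' {x ∈ Y | ∀ i, Fh i x ≤ εh i}) := by
    have : F0 '' {x ∈ Y | ∀ i, Fh i x ≤ εh i} ⊆ F0 '' Y :=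
      Set.image_mono (Set.sep_subset _ _)
    exact (hY.image_of_continuousOn hF0).bddBelow.mono this
  have hInf : sInf (F0 '' {x ∈ Y | ∀ i, Fh i x ≤ εh i}) ≤ F0 xstar :=
    csInf_le hbdd ⟨xstar, hxsX, rfl⟩
  have hxhγ := hsub hxh
  have hMxh := hM xh hxhγ.1 hxhγ.2
  linarith
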